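/- Consider the two-resource instance with weights w = (s_1, ..., s_n, S+1, S+1) where S = ∑ s_i, and m = 2. There exists an assignment satisfying weak monotonicity and credibility if and only if {s_1, ..., s_n} admits a partition into two parts of equal sum. -/

import Mathlib

/-- Load of resource `x` under assignment `a`. -/
def load {α : Type} [Fintype α] [DecidableEq α] (w : α → ℤ) (a : α → Fin 2) (x : Fin 2) : ℤ :=
  ∑ i ∈ Finset.univ.filter (fun i => a i = x), w i

lemma load_eq {n : ℕ} (w : Fin n ⊕ Fin 2 → ℤ) (a : Fin n ⊕ Fin 2 → Fin 2) (x : Fin 2) :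
    load w a x =
      (∑ i ∈ Finset.univ.filter (fun i : Fin n => a (Sum.inl i) = x), w (Sum.inl i))
      + ((if a (Sum.inr 0) = x then w (Sum.inr 0) else 0)
        + (if a (Sum.inr 1) = x then w (Sum.inr 1) else 0)) := by
  rw [load, Finset.sum_filter, Fintype.sum_sum_type, ← Finset.sum_filter, Fin.sum_univ_two]

theorem stmt_13 {n : ℕ} (s : Fin n → ℤ) (hs : ∀ i, 0 < s i)
    (S : ℤ) (hS : S = ∑ i, s i)
    (w : Fin n ⊕ Fin 2 → ℤ)
    (hw1 : ∀ i : Fin n, w (Sum.inl i) = s i)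
    (hw2 : ∀ j : Fin 2, w (Sum.inr j) = S + 1) :
    (∃ a : Fin n ⊕ Fin 2 → Fin 2,
        (∀ i j, w i < w j → load w a (a i) ≤ load w a (a j)) ∧
        (∀ i x, load w a (a i) ≤ load w a x + w i)) ↔
      (∃ T : Finset (Fin n), ∑ i ∈ T, s i = ∑ i ∈ Tᶜ, s i) := by
  have hfin2 : ∀ x : Fin 2, x = 0 ∨ x = 1 := by decide
  have hS0 : 0 ≤ S := by
    rw [hS]; exact Finset.sum_nonneg fun i _ => (hs i).le
  constructor
  · rintro ⟨a, hmono, hcred⟩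
    set A : Fin 2 → ℤ := fun x => ∑ i ∈ Finset.univ.filter (fun i : Fin n => a (Sum.inl i) = x), s i with hA
    have hAeq : ∀ x, A x = ∑ i ∈ Finset.univ.filter (fun i : Fin n => a (Sum.inl i) = x), w (Sum.inl i) := by
      intro x; simp only [hA, hw1]
    have hA0 : ∀ x, 0 ≤ A x := fun x => Finset.sum_nonneg fun i _ => (hs i).le
    have hAsum : A 0 + A 1 = S := by
      rw [hS, ← Finset.sum_filter_add_sum_filter_not Finset.univ (fun i => a (Sum.inl i) = 0) s]
      congr 1
      apply Finset.sum_congr _ (fun _ _ => rfl)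
      apply Finset.filter_congr
      intro i _
      rcases hfin2 (a (Sum.inl i)) with h | h <;> simp [h]
    have hsle : ∀ i : Fin n, s i ≤ S := by
      intro i; rw [hS]
      exact Finset.single_le_sum (fun j _ => (hs j).le) (Finset.mem_univ i)
    -- heavy players on distinct resources
    have hdist : a (Sum.inr 0) ≠ a (Sum.inr 1) := by
      intro hne
      have hc := hcred (Sum.inr 0) (if a (Sum.inr 0) = 0 then 1 else 0)
      rcases hfin2 (a (Sum.inr 0)) with h | h <;>
      · rw [load_eq, load_eq, ← hAeq, ← hAeq, h, ← hne, h] at hc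
        simp only [h, hw2] at hc
        norm_num at hc
        have := hA0 0; have := hA0 1
        omega
    -- get which heavy is where, and show A 0 = A 1
    have key : ∀ j0 j1 : Fin 2, a (Sum.inr j0) = 0 → a (Sum.inr j1) = 1 → A 0 = A 1 := by
      intro j0 j1 h0 h1
      by_contra hne
      rcases lt_or_gt_of_ne hne with hlt | hlt
      · -- A 0 < A 1, so some small player on resource 1
        have hpos : A 1 ≠ 0 := by have := hA0 0; omega
        obtain ⟨i, hi⟩ := Finset.nonempty_of_sum_ne_zero hpos
        have him : a (Sum.inl i) = 1 := (Finset.mem_filter.mp hi).2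
        have hm := hmono (Sum.inl i) (Sum.inr j0) (by rw [hw1, hw2]; have := hsle i; omega)
        rw [him, h0, load_eq, load_eq, ← hAeq, ← hAeq] at hm
        have hj01 : j0 ≠ j1 := by intro h; rw [h, h1] at h0; exact absurd h0 (by decide)
        rcases hfin2 j0 with hj | hj <;> rcases hfin2 j1 with hj' | hj' <;>
          simp_all [hw2] <;> omega
      · have hpos : A 0 ≠ 0 := by have := hA0 1; omega
        obtain ⟨i, hi⟩ := Finset.nonempty_of_sum_ne_zero hpos
        have him : a (Sum.inl i) = 0 := (Finset.mem_filter.mp hi).2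
        have hm := hmono (Sum.inl i) (Sum.inr j1) (by rw [hw1, hw2]; have := hsle i; omega)
        rw [him, h1, load_eq, load_eq, ← hAeq, ← hAeq] at hm
        have hj01 : j0 ≠ j1 := by intro h; rw [h, h1] at h0; exact absurd h0 (by decide)
        rcases hfin2 j0 with hj | hj <;> rcases hfin2 j1 with hj' | hj' <;>
          simp_all [hw2] <;> omega
    have hAeq01 : A 0 = A 1 := by
      rcases hfin2 (a (Sum.inr 0)) with h | h
      · exact key 0 1 h (by rcases hfin2 (a (Sum.inr 1)) with h' | h' <;> [exact absurd (h.trans h'.symm) hdist; exact h'])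
      · exact key 1 0 (by rcases hfin2 (a (Sum.inr 1)) with h' | h' <;> [exact h'; exact absurd (h.trans h'.symm) hdist]) h
    refine ⟨Finset.univ.filter (fun i : Fin n => a (Sum.inl i) = 0), ?_⟩
    have hcompl : (Finset.univ.filter (fun i : Fin n => a (Sum.inl i) = 0))ᶜ
        = Finset.univ.filter (fun i : Fin n => a (Sum.inl i) = 1) := by
      rw [Finset.compl_filter]
      apply Finset.filter_congr
      intro i _
      rcases hfin2 (a (Sum.inl i)) with h | h <;> simp [h]
    rw [hcompl]; exact hAeq01
  · rintro ⟨T, hT⟩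
    set a : Fin n ⊕ Fin 2 → Fin 2 := Sum.elim (fun i => if i ∈ T then 0 else 1) (fun j => j)
      with ha
    have hload : ∀ x : Fin 2, load w a x = (∑ i ∈ T, s i) + (S + 1) := by
      intro x
      rw [load_eq]
      have hf0 : Finset.univ.filter (fun i : Fin n => a (Sum.inl i) = x)
          = if x = 0 then T else Tᶜ := by
        rcases hfin2 x with h | h <;>
        · subst h
          ext i
          by_cases hi : i ∈ T <;> simp [ha, hi]
      rcases hfin2 x with h | h <;>
      · subst h
        simp only [hf0, hw1, hw2, ha, Sum.elim_inr]
        norm_num [hT, ← Finset.compl_filter]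
    refine ⟨a, fun i j _ => by rw [hload, hload], fun i x => ?_⟩
    rw [hload, hload]
    have hwpos : 0 < w i := by
      cases i with
      | inl i => rw [hw1]; exact hs i
      | inr j => rw [hw2]; omega
    omega
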